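/- Let A ∈ ℝ^{N×N} be block partitioned with blocks A_{ij} ∈ ℝ^{k_i×k_j}. Suppose each diagonal block A_{ii} is Hurwitz, and there exist positive scalars d_1,…,d_n such that for all i: (sup_{Re(λ)≥0} ‖(λI - A_{ii})^{-1}‖₂)^{-1} · d_i > Σ_{j≠i} ‖A_{ij}‖₂ · d_j. Then A is Hurwitz. -/

import Mathlib

open Matrix Finset

/-- `A` is Hurwitz: every complex eigenvalue has negative real part. -/
def IsHurwitz {n : Type*} [Fintype n] [DecidableEq n] (A : Matrix n n ℝ) : Prop :=
  ∀ μ ∈ spectrum ℂ (A.map (algebraMap ℝ ℂ)), μ.re < 0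

/-- Spectral norm (maximal singular value) of a complex matrix. -/
noncomputable def specNorm {p q : ℕ} (M : Matrix (Fin p) (Fin q) ℂ) : ℝ :=
  ‖LinearMap.toContinuousLinearMap (Matrix.toEuclideanLin M)‖

/-- Spectral norm (maximal singular value) of a real matrix. -/
noncomputable def specNormR {p q : ℕ} (M : Matrix (Fin p) (Fin q) ℝ) : ℝ :=
  ‖LinearMap.toContinuousLinearMap (Matrix.toEuclideanLin M)‖

/-- The `(i, j)` block of an `α`-partitioned matrix. -/
def blk {n : ℕ} {k : Fin n → ℕ} {R : Type*}
    (A : Matrix ((i : Fin n) × Fin (k i)) ((i : Fin n) × Fin (k i)) R)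
    (i j : Fin n) : Matrix (Fin (k i)) (Fin (k j)) R :=
  Matrix.of fun a b => A ⟨i, a⟩ ⟨j, b⟩

/-- The supremum of the resolvent norm of `B` over the closed right half-plane:
the H∞ norm of `(sI - B)⁻¹` when `B` is Hurwitz. -/
noncomputable def resolventSupRHP {m : ℕ} (B : Matrix (Fin m) (Fin m) ℝ) : ℝ :=
  ⨆ lam : {z : ℂ // 0 ≤ z.re},
    specNorm ((lam.1 • (1 : Matrix (Fin m) (Fin m) ℂ) - B.map (algebraMap ℝ ℂ))⁻¹)

lemma specNorm_nonneg {p q : ℕ} (M : Matrix (Fin p) (Fin q) ℂ) : 0 ≤ specNorm M := norm_nonneg _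
lemma specNormR_nonneg {p q : ℕ} (M : Matrix (Fin p) (Fin q) ℝ) : 0 ≤ specNormR M := norm_nonneg _

lemma mulVec_norm_le {p q : ℕ} (M : Matrix (Fin p) (Fin q) ℂ) (v : Fin q → ℂ) :
    ‖(WithLp.equiv 2 (Fin p → ℂ)).symm (M *ᵥ v)‖ ≤
      specNorm M * ‖(WithLp.equiv 2 (Fin q → ℂ)).symm v‖ := by
  have := (LinearMap.toContinuousLinearMap (Matrix.toEuclideanLin M)).le_opNorm
    ((WithLp.equiv 2 (Fin q → ℂ)).symm v)
  simpa [Matrix.toEuclideanLin_apply_piLp_toLp, specNorm] using this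

lemma mulVec_norm_leR {p q : ℕ} (M : Matrix (Fin p) (Fin q) ℝ) (v : Fin q → ℝ) :
    ‖(WithLp.equiv 2 (Fin p → ℝ)).symm (M *ᵥ v)‖ ≤
      specNormR M * ‖(WithLp.equiv 2 (Fin q → ℝ)).symm v‖ := by
  have := (LinearMap.toContinuousLinearMap (Matrix.toEuclideanLin M)).le_opNorm
    ((WithLp.equiv 2 (Fin q → ℝ)).symm v)
  simpa [Matrix.toEuclideanLin_apply_piLp_toLp, specNormR] using this

lemma specNorm_map_le {p q : ℕ} (M : Matrix (Fin p) (Fin q) ℝ) :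
    specNorm (M.map (algebraMap ℝ ℂ)) ≤ specNormR M := by
  apply ContinuousLinearMap.opNorm_le_bound _ (specNormR_nonneg M)
  intro v
  set c := specNormR M with hc
  simp only [LinearMap.coe_toContinuousLinearMap', Matrix.toEuclideanLin_apply]
  set w : Fin q → ℂ := WithLp.equiv 2 (Fin q → ℂ) v with hw
  set x : Fin q → ℝ := fun b => (w b).re with hx
  set y : Fin q → ℝ := fun b => (w b).im with hy
  have hre : ∀ a, (((M.map (algebraMap ℝ ℂ)) *ᵥ w) a).re = (M *ᵥ x) a := by
    intro a
    simp [Matrix.mulVec, dotProduct, Complex.re_sum, Complex.mul_re, hx]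
  have him : ∀ a, (((M.map (algebraMap ℝ ℂ)) *ᵥ w) a).im = (M *ᵥ y) a := by
    intro a
    simp [Matrix.mulVec, dotProduct, Complex.im_sum, Complex.mul_im, hy]
  have hxb := mulVec_norm_leR M x
  have hyb := mulVec_norm_leR M y
  have hnormx : ‖(WithLp.equiv 2 (Fin q → ℝ)).symm x‖ ^ 2 = ∑ b, x b ^ 2 := by
    rw [EuclideanSpace.norm_eq, Real.sq_sqrt (by positivity)]
    simp [Real.norm_eq_abs, sq_abs]
  have hnormy : ‖(WithLp.equiv 2 (Fin q → ℝ)).symm y‖ ^ 2 = ∑ b, y b ^ 2 := by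
    rw [EuclideanSpace.norm_eq, Real.sq_sqrt (by positivity)]
    simp [Real.norm_eq_abs, sq_abs]
  have hnormMx : ‖(WithLp.equiv 2 (Fin p → ℝ)).symm (M *ᵥ x)‖ ^ 2 = ∑ a, ((M *ᵥ x) a) ^ 2 := by
    rw [EuclideanSpace.norm_eq, Real.sq_sqrt (by positivity)]
    simp [Real.norm_eq_abs, sq_abs]
  have hnormMy : ‖(WithLp.equiv 2 (Fin p → ℝ)).symm (M *ᵥ y)‖ ^ 2 = ∑ a, ((M *ᵥ y) a) ^ 2 := by
    rw [EuclideanSpace.norm_eq, Real.sq_sqrt (by positivity)]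
    simp [Real.norm_eq_abs, sq_abs]
  have hvsq : ‖v‖ ^ 2 = (∑ b, x b ^ 2) + ∑ b, y b ^ 2 := by
    rw [EuclideanSpace.norm_eq, Real.sq_sqrt (by positivity), ← Finset.sum_add_distrib]
    congr 1; funext b
    have : v b = w b := rfl
    rw [this, Complex.sq_norm, Complex.normSq_apply]
    ring
  have hkey : ‖(WithLp.equiv 2 (Fin p → ℂ)).symm ((M.map (algebraMap ℝ ℂ)) *ᵥ w)‖ ^ 2
      ≤ (c * ‖v‖) ^ 2 := by
    have hL : ‖(WithLp.equiv 2 (Fin p → ℂ)).symm ((M.map (algebraMap ℝ ℂ)) *ᵥ w)‖ ^ 2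
        = (∑ a, ((M *ᵥ x) a) ^ 2) + ∑ a, ((M *ᵥ y) a) ^ 2 := by
      rw [EuclideanSpace.norm_eq, Real.sq_sqrt (by positivity), ← Finset.sum_add_distrib]
      congr 1; funext a
      rw [show ((WithLp.equiv 2 (Fin p → ℂ)).symm ((M.map (algebraMap ℝ ℂ)) *ᵥ w)) a
          = ((M.map (algebraMap ℝ ℂ)) *ᵥ w) a from rfl]
      rw [Complex.sq_norm, Complex.normSq_apply, hre a, him a]; ring
    rw [hL]
    have h1 : (∑ a, ((M *ᵥ x) a) ^ 2) ≤ c ^ 2 * ∑ b, x b ^ 2 := by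
      have := mul_self_le_mul_self (norm_nonneg _) hxb
      calc (∑ a, ((M *ᵥ x) a) ^ 2) = ‖(WithLp.equiv 2 (Fin p → ℝ)).symm (M *ᵥ x)‖ ^ 2 :=
            hnormMx.symm
        _ ≤ (c * ‖(WithLp.equiv 2 (Fin q → ℝ)).symm x‖) ^ 2 := by
            rw [sq, sq]; exact this
        _ = c ^ 2 * ∑ b, x b ^ 2 := by rw [mul_pow, hnormx]
    have h2 : (∑ a, ((M *ᵥ y) a) ^ 2) ≤ c ^ 2 * ∑ b, y b ^ 2 := by
      have := mul_self_le_mul_self (norm_nonneg _) hyb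
      calc (∑ a, ((M *ᵥ y) a) ^ 2) = ‖(WithLp.equiv 2 (Fin p → ℝ)).symm (M *ᵥ y)‖ ^ 2 :=
            hnormMy.symm
        _ ≤ (c * ‖(WithLp.equiv 2 (Fin q → ℝ)).symm y‖) ^ 2 := by
            rw [sq, sq]; exact this
        _ = c ^ 2 * ∑ b, y b ^ 2 := by rw [mul_pow, hnormy]
    calc (∑ a, ((M *ᵥ x) a) ^ 2) + ∑ a, ((M *ᵥ y) a) ^ 2
        ≤ c ^ 2 * (∑ b, x b ^ 2) + c ^ 2 * ∑ b, y b ^ 2 := add_le_add h1 h2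
      _ = (c * ‖v‖) ^ 2 := by rw [mul_pow, hvsq]; ring
  have hcnn : 0 ≤ c * ‖v‖ := mul_nonneg (specNormR_nonneg M) (norm_nonneg _)
  exact (pow_le_pow_iff_left₀ (norm_nonneg _) hcnn two_ne_zero).mp hkey

lemma spec_iff_det {m : Type*} [Fintype m] [DecidableEq m] (M : Matrix m m ℂ) (μ : ℂ) :
    μ ∈ spectrum ℂ M ↔ (μ • (1 : Matrix m m ℂ) - M).det = 0 := by
  rw [spectrum.mem_iff, Algebra.algebraMap_eq_smul_one]
  constructor
  · intro h
    by_contra hdet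
    exact h ((Matrix.isUnit_iff_isUnit_det _).2 (isUnit_iff_ne_zero.2 hdet))
  · intro h hu
    exact (isUnit_iff_ne_zero.1 ((Matrix.isUnit_iff_isUnit_det _).1 hu)) h

theorem block_scaled_diag_dominant_hurwitz {n : ℕ} (k : Fin n → ℕ)
    (A : Matrix ((i : Fin n) × Fin (k i)) ((i : Fin n) × Fin (k i)) ℝ)
    (hblk : ∀ i, IsHurwitz (blk A i i))
    (d : Fin n → ℝ) (hd : ∀ i, 0 < d i)
    (hdom : ∀ i, (resolventSupRHP (blk A i i))⁻¹ * d i >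
        ∑ j ∈ Finset.univ.erase i, specNormR (blk A i j) * d j) :
    IsHurwitz A := by
  intro μ hμ
  by_contra hre'
  push_neg at hre'
  -- extract an eigenvector
  rw [spec_iff_det] at hμ
  obtain ⟨v, hvne, hv0⟩ := (Matrix.exists_mulVec_eq_zero_iff).2 hμ
  -- block components
  set B : (i j : Fin n) → Matrix (Fin (k i)) (Fin (k j)) ℂ :=
    fun i j => (blk A i j).map (algebraMap ℝ ℂ) with hB
  set f : (i : Fin n) → (Fin (k i) → ℂ) := fun i a => v ⟨i, a⟩ with hf
  -- eigen-equation
  have heig : (A.map (algebraMap ℝ ℂ)) *ᵥ v = μ • v := by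
    have := hv0
    rw [Matrix.sub_mulVec, sub_eq_zero] at this
    rw [← this, Matrix.smul_mulVec, Matrix.one_mulVec]
  -- blockwise equation
  have hblkeq : ∀ i, (μ • (1 : Matrix (Fin (k i)) (Fin (k i)) ℂ) - B i i) *ᵥ f i =
      ∑ j ∈ Finset.univ.erase i, (B i j) *ᵥ f j := by
    intro i
    funext a
    have h1 : ((A.map (algebraMap ℝ ℂ)) *ᵥ v) ⟨i, a⟩ = μ * v ⟨i, a⟩ := by
      rw [heig]; rfl
    have h2 : ((A.map (algebraMap ℝ ℂ)) *ᵥ v) ⟨i, a⟩ = ∑ j, ((B i j) *ᵥ f j) a := by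
      show ∑ s : (i : Fin n) × Fin (k i), (A.map (algebraMap ℝ ℂ)) ⟨i, a⟩ s * v s = _
      rw [← Finset.univ_sigma_univ, Finset.sum_sigma]
      rfl
    have h3 : ∑ j, ((B i j) *ᵥ f j) a
        = ((B i i) *ᵥ f i) a + ∑ j ∈ Finset.univ.erase i, ((B i j) *ᵥ f j) a :=
      (Finset.add_sum_erase _ _ (Finset.mem_univ i)).symm
    have h4 : μ * v ⟨i, a⟩ = ((B i i) *ᵥ f i) a
        + ∑ j ∈ Finset.univ.erase i, ((B i j) *ᵥ f j) a := by
      rw [← h3, ← h2, h1]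
    have h5 : ((μ • (1 : Matrix (Fin (k i)) (Fin (k i)) ℂ) - B i i) *ᵥ f i) a
        = μ * f i a - ((B i i) *ᵥ f i) a := by
      rw [Matrix.sub_mulVec, Matrix.smul_mulVec, Matrix.one_mulVec]
      rfl
    rw [h5, Finset.sum_apply]
    show μ * v ⟨i, a⟩ - ((B i i) *ᵥ f i) a = _
    rw [h4]; ring
  -- norms
  set N : Fin n → ℝ := fun j => ‖(WithLp.equiv 2 (Fin (k j) → ℂ)).symm (f j)‖ with hN
  have hNnn : ∀ j, 0 ≤ N j := fun j => norm_nonneg _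
  -- positivity of some N
  have : ∃ s : (i : Fin n) × Fin (k i), v s ≠ 0 := by
    by_contra h
    push_neg at h
    exact hvne (funext h)
  obtain ⟨⟨i0, a0⟩, hva⟩ := this
  have hNi0 : 0 < N i0 := by
    rw [hN]
    simp only []
    rw [norm_pos_iff]
    intro h
    exact hva (congrFun (congrArg (WithLp.equiv 2 (Fin (k i0) → ℂ)) h) a0)
  -- argmax of N j / d j
  obtain ⟨i, -, hmax⟩ := Finset.exists_max_image Finset.univ (fun j => N j / d j)
    ⟨i0, Finset.mem_univ i0⟩
  set t := N i / d i with ht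
  have htpos : 0 < t := lt_of_lt_of_le (div_pos hNi0 (hd i0)) (hmax i0 (Finset.mem_univ i0))
  have hNle : ∀ j, N j ≤ t * d j := fun j =>
    (div_le_iff₀ (hd j)).mp (hmax j (Finset.mem_univ j))
  have hNi : N i = t * d i := (div_mul_cancel₀ _ (ne_of_gt (hd i))).symm
  -- resolvent bound
  set R := resolventSupRHP (blk A i i) with hR
  have hsum_nonneg : (0 : ℝ) ≤ ∑ j ∈ Finset.univ.erase i, specNormR (blk A i j) * d j :=
    Finset.sum_nonneg fun j _ => mul_nonneg (specNormR_nonneg _) (le_of_lt (hd j))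
  have hRinvpos : 0 < R⁻¹ := by
    have h := lt_of_le_of_lt hsum_nonneg (hdom i)
    nlinarith [hd i]
  have hRpos : 0 < R := inv_pos.mp hRinvpos
  -- the resolvent matrix
  set Rm : Matrix (Fin (k i)) (Fin (k i)) ℂ :=
    μ • (1 : Matrix (Fin (k i)) (Fin (k i)) ℂ) - B i i with hRm
  have hdet : Rm.det ≠ 0 := by
    intro h
    have : μ ∈ spectrum ℂ (B i i) := (spec_iff_det _ _).2 h
    exact absurd (hblk i μ this) (not_lt.2 hre')
  have hRle : specNorm Rm⁻¹ ≤ R := by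
    by_cases hbdd : BddAbove (Set.range fun lam : {z : ℂ // 0 ≤ z.re} =>
      specNorm ((lam.1 • (1 : Matrix (Fin (k i)) (Fin (k i)) ℂ)
        - (blk A i i).map (algebraMap ℝ ℂ))⁻¹))
    · exact le_ciSup hbdd ⟨μ, hre'⟩
    · exfalso
      have : R = 0 := Real.iSup_of_not_bddAbove hbdd
      rw [this] at hRpos
      exact lt_irrefl _ hRpos
  -- recover f i from the block equation
  have hfi : f i = Rm⁻¹ *ᵥ (∑ j ∈ Finset.univ.erase i, (B i j) *ᵥ f j) := by
    rw [← hblkeq i, Matrix.mulVec_mulVec, Matrix.nonsing_inv_mul _ (isUnit_iff_ne_zero.2 hdet),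
      Matrix.one_mulVec]
  -- norm chain
  have hsymm_sum : (WithLp.equiv 2 (Fin (k i) → ℂ)).symm
      (∑ j ∈ Finset.univ.erase i, (B i j) *ᵥ f j)
      = ∑ j ∈ Finset.univ.erase i,
          (WithLp.equiv 2 (Fin (k i) → ℂ)).symm ((B i j) *ᵥ f j) := by exact WithLp.toLp_sum ..
  have step1 : N i ≤ specNorm Rm⁻¹ * ∑ j ∈ Finset.univ.erase i, specNormR (blk A i j) * N j := by
    calc N i = ‖(WithLp.equiv 2 (Fin (k i) → ℂ)).symm
          (Rm⁻¹ *ᵥ (∑ j ∈ Finset.univ.erase i, (B i j) *ᵥ f j))‖ := by rw [hN, ← hfi]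
      _ ≤ specNorm Rm⁻¹ * ‖(WithLp.equiv 2 (Fin (k i) → ℂ)).symm
          (∑ j ∈ Finset.univ.erase i, (B i j) *ᵥ f j)‖ := mulVec_norm_le _ _
      _ ≤ specNorm Rm⁻¹ * ∑ j ∈ Finset.univ.erase i, specNormR (blk A i j) * N j := by
          apply mul_le_mul_of_nonneg_left _ (specNorm_nonneg _)
          rw [hsymm_sum]
          refine le_trans (norm_sum_le _ _) (Finset.sum_le_sum fun j _ => ?_)
          calc ‖(WithLp.equiv 2 (Fin (k i) → ℂ)).symm ((B i j) *ᵥ f j)‖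
              ≤ specNorm (B i j) * N j := mulVec_norm_le _ _
            _ ≤ specNormR (blk A i j) * N j :=
                mul_le_mul_of_nonneg_right (specNorm_map_le _) (hNnn j)
  have step2 : specNorm Rm⁻¹ * (∑ j ∈ Finset.univ.erase i, specNormR (blk A i j) * N j)
      ≤ R * ∑ j ∈ Finset.univ.erase i, specNormR (blk A i j) * (t * d j) := by
    apply mul_le_mul hRle (Finset.sum_le_sum fun j _ =>
      mul_le_mul_of_nonneg_left (hNle j) (specNormR_nonneg _))
      (Finset.sum_nonneg fun j _ => mul_nonneg (specNormR_nonneg _) (hNnn j))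
      (le_of_lt hRpos)
  have step3 : R * ∑ j ∈ Finset.univ.erase i, specNormR (blk A i j) * (t * d j)
      = (R * t) * ∑ j ∈ Finset.univ.erase i, specNormR (blk A i j) * d j := by
    rw [Finset.mul_sum, Finset.mul_sum]
    congr 1; funext j; ring
  have step4 : (R * t) * (∑ j ∈ Finset.univ.erase i, specNormR (blk A i j) * d j)
      < (R * t) * (R⁻¹ * d i) :=
    mul_lt_mul_of_pos_left (hdom i) (mul_pos hRpos htpos)
  have step5 : (R * t) * (R⁻¹ * d i) = t * d i := by
    field_simp
  have : N i < t * d i := by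
    calc N i ≤ specNorm Rm⁻¹ * ∑ j ∈ Finset.univ.erase i, specNormR (blk A i j) * N j := step1
      _ ≤ R * ∑ j ∈ Finset.univ.erase i, specNormR (blk A i j) * (t * d j) := step2
      _ = (R * t) * ∑ j ∈ Finset.univ.erase i, specNormR (blk A i j) * d j := step3
      _ < (R * t) * (R⁻¹ * d i) := step4
      _ = t * d i := step5
  rw [hNi] at this
  exact lt_irrefl _ this
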